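/- Let 0 ≤ α < n, let 0 ≤ λ₁, λ₂ < n, and let Φ, Ψ be Young functions such that (i) M_α is bounded from L_Φ(ℝⁿ) to L_Ψ(ℝⁿ), (ii) there is c > 0 with Φ⁻¹(t) ≤ c·t^{α/n}·Ψ⁻¹(t) for all t > 0, and (iii) there is C > 0 with sup_{r<t<∞} Ψ⁻¹(t⁻ⁿ)/Φ⁻¹(t^{−λ₁}) ≤ C·Ψ⁻¹(r⁻ⁿ)/Ψ⁻¹(r^{−λ₂}) for all r > 0. Then M_α is bounded from the Orlicz–Morrey space M_{Φ,λ₁}(ℝⁿ) to M_{Ψ,λ₂}(ℝⁿ): there is C' > 0 with ‖M_α f‖_{M_{Ψ,λ₂}} ≤ C'·‖f‖_{M_{Φ,λ₁}} for all locally integrable f. -/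

import Mathlib

open MeasureTheory Metric Set NNReal ENNReal Filter

noncomputable section

/-- A Young function: a convex, left-continuous `Φ : [0,∞) → [0,∞]` with `Φ(0) = 0`
and `Φ(r) → ∞` as `r → ∞`. -/
structure YoungFunction where
  toFun : ℝ≥0 → ℝ≥0∞
  map_zero' : toFun 0 = 0
  convex' : ∀ (s t a b : ℝ≥0), a + b = 1 →
    toFun (a * s + b * t) ≤ (a : ℝ≥0∞) * toFun s + (b : ℝ≥0∞) * toFun t
  left_continuous' : ∀ s : ℝ≥0, 0 < s → toFun s = ⨆ (t : ℝ≥0) (_ : t < s), toFun t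
  tendsto_top' : Tendsto toFun atTop (nhds (⊤ : ℝ≥0∞))

namespace YoungFunction

/-- The generalized inverse `Φ⁻¹(s) = inf {r ≥ 0 : Φ(r) > s}` (with `inf ∅ = ∞`). -/
def inv (Φ : YoungFunction) (s : ℝ≥0∞) : ℝ≥0∞ :=
  sInf ((fun r : ℝ≥0 => (r : ℝ≥0∞)) '' {r : ℝ≥0 | s < Φ.toFun r})

/-- The canonical extension of `Φ` to `[0,∞]`. -/
def ext (Φ : YoungFunction) (s : ℝ≥0∞) : ℝ≥0∞ :=
  if s = ⊤ then ⊤ else Φ.toFun s.toNNReal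

/-- `Φ` is of lower type `p`: `Φ(st) ≤ C t^p Φ(s)` for all `t ∈ [0,1]`, `s ≥ 0`. -/
def IsLowerType (Φ : YoungFunction) (p : ℝ) : Prop :=
  ∃ C : ℝ, 0 < C ∧ ∀ (s t : ℝ≥0), t ≤ 1 →
    Φ.toFun (s * t) ≤ ENNReal.ofReal C * (t : ℝ≥0∞) ^ p * Φ.toFun s

/-- `Φ` is of upper type `p`: `Φ(st) ≤ C t^p Φ(s)` for all `t ≥ 1`, `s ≥ 0`. -/
def IsUpperType (Φ : YoungFunction) (p : ℝ) : Prop :=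
  ∃ C : ℝ, 0 < C ∧ ∀ (s t : ℝ≥0), 1 ≤ t →
    Φ.toFun (s * t) ≤ ENNReal.ofReal C * (t : ℝ≥0∞) ^ p * Φ.toFun s

end YoungFunction

variable {X : Type*} [MeasurableSpace X]

/-- The Luxemburg norm `‖g‖_{L_Φ(E)}` of an `[0,∞]`-valued function `g` on a set `E`. -/
def luxNormE (Φ : YoungFunction) (μ : Measure X) (E : Set X) (g : X → ℝ≥0∞) : ℝ≥0∞ :=
  sInf {lam : ℝ≥0∞ | 0 < lam ∧ ∫⁻ x in E, Φ.ext (g x / lam) ∂μ ≤ 1}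

/-- The Luxemburg norm `‖f‖_{L_Φ(E)}` of a real-valued function `f` on a set `E`. -/
def luxNorm (Φ : YoungFunction) (μ : Measure X) (E : Set X) (f : X → ℝ) : ℝ≥0∞ :=
  luxNormE Φ μ E fun x => (‖f x‖₊ : ℝ≥0∞)

/-- The weak Luxemburg norm `‖g‖_{WL_Φ(E)}`. -/
def wLuxNormE (Φ : YoungFunction) (μ : Measure X) (E : Set X) (g : X → ℝ≥0∞) : ℝ≥0∞ :=
  sInf {lam : ℝ≥0∞ | 0 < lam ∧
    ∀ t : ℝ≥0, 0 < t → Φ.toFun t * μ {x | x ∈ E ∧ (t : ℝ≥0∞) < g x / lam} ≤ 1}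

/-- The weak Luxemburg norm of a real-valued function. -/
def wLuxNorm (Φ : YoungFunction) (μ : Measure X) (E : Set X) (f : X → ℝ) : ℝ≥0∞ :=
  wLuxNormE Φ μ E fun x => (‖f x‖₊ : ℝ≥0∞)

/-- Euclidean space `ℝⁿ` with Lebesgue measure. -/
abbrev En (n : ℕ) := EuclideanSpace ℝ (Fin n)

/-- The fractional maximal operator
`M_α f(x) = sup_{t>0} |B(x,t)|^{α/n - 1} ∫_{B(x,t)} |f(y)| dy`. -/
def fracMaximal (n : ℕ) (α : ℝ) (f : En n → ℝ) (x : En n) : ℝ≥0∞ :=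
  ⨆ (t : ℝ) (_ : 0 < t),
    volume (ball x t) ^ (α / (n : ℝ) - 1) * ∫⁻ y in ball x t, (‖f y‖₊ : ℝ≥0∞)

/-- The commutator of the fractional maximal operator
`M_{b,α} f(x) = sup_{t>0} |B(x,t)|^{α/n - 1} ∫_{B(x,t)} |b(x)-b(y)||f(y)| dy`. -/
def commFracMaximal (n : ℕ) (α : ℝ) (b f : En n → ℝ) (x : En n) : ℝ≥0∞ :=
  ⨆ (t : ℝ) (_ : 0 < t),
    volume (ball x t) ^ (α / (n : ℝ) - 1) *
      ∫⁻ y in ball x t, (‖b x - b y‖₊ : ℝ≥0∞) * (‖f y‖₊ : ℝ≥0∞)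

/-- The Hardy–Littlewood maximal operator. -/
def hlMaximal (n : ℕ) (f : En n → ℝ) (x : En n) : ℝ≥0∞ :=
  ⨆ (t : ℝ) (_ : 0 < t),
    (volume (ball x t))⁻¹ * ∫⁻ y in ball x t, (‖f y‖₊ : ℝ≥0∞)

/-- The commutator of the Hardy–Littlewood maximal operator. -/
def commMaximal (n : ℕ) (b f : En n → ℝ) (x : En n) : ℝ≥0∞ :=
  ⨆ (t : ℝ) (_ : 0 < t),
    (volume (ball x t))⁻¹ * ∫⁻ y in ball x t, (‖b x - b y‖₊ : ℝ≥0∞) * (‖f y‖₊ : ℝ≥0∞)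

/-- The generalized Orlicz–Morrey norm `‖g‖_{M_{Φ,φ}}` (for `[0,∞]`-valued functions). -/
def morreyNormE (n : ℕ) (Φ : YoungFunction) (φ : En n → ℝ → ℝ) (g : En n → ℝ≥0∞) : ℝ≥0∞ :=
  ⨆ (x : En n) (r : ℝ) (_ : 0 < r),
    (ENNReal.ofReal (φ x r))⁻¹ * Φ.inv (ENNReal.ofReal r ^ (-(n : ℝ))) *
      luxNormE Φ volume (ball x r) g

/-- The generalized Orlicz–Morrey norm of a real-valued function. -/
def morreyNorm (n : ℕ) (Φ : YoungFunction) (φ : En n → ℝ → ℝ) (f : En n → ℝ) : ℝ≥0∞ :=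
  morreyNormE n Φ φ fun x => (‖f x‖₊ : ℝ≥0∞)

/-- The weak generalized Orlicz–Morrey norm `‖g‖_{WM_{Φ,φ}}`. -/
def wMorreyNormE (n : ℕ) (Φ : YoungFunction) (φ : En n → ℝ → ℝ) (g : En n → ℝ≥0∞) : ℝ≥0∞ :=
  ⨆ (x : En n) (r : ℝ) (_ : 0 < r),
    (ENNReal.ofReal (φ x r))⁻¹ * Φ.inv (ENNReal.ofReal r ^ (-(n : ℝ))) *
      wLuxNormE Φ volume (ball x r) g

/-- The Orlicz–Morrey norm `‖g‖_{M_{Φ,λ}}` with exponent `λ`. -/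
def morreyLamNormE (n : ℕ) (Φ : YoungFunction) (lam : ℝ) (g : En n → ℝ≥0∞) : ℝ≥0∞ :=
  ⨆ (x : En n) (r : ℝ) (_ : 0 < r),
    Φ.inv (ENNReal.ofReal r ^ (-lam)) * luxNormE Φ volume (ball x r) g

/-- The Orlicz–Morrey norm with exponent `λ` of a real-valued function. -/
def morreyLamNorm (n : ℕ) (Φ : YoungFunction) (lam : ℝ) (f : En n → ℝ) : ℝ≥0∞ :=
  morreyLamNormE n Φ lam fun x => (‖f x‖₊ : ℝ≥0∞)

/-- The average `f_{B(x,r)}` of `f` over the ball `B(x,r)`. -/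
def ballAvg (n : ℕ) (b : En n → ℝ) (x : En n) (r : ℝ) : ℝ :=
  ⨍ y in ball x r, b y

/-- The BMO seminorm `‖b‖_*`. -/
def bmoSeminorm (n : ℕ) (b : En n → ℝ) : ℝ≥0∞ :=
  ⨆ (x : En n) (r : ℝ) (_ : 0 < r),
    ENNReal.ofReal (⨍ y in ball x r, |b y - ballAvg n b x r|)
namespace YoungFunction

variable (Φ : YoungFunction)

lemma scale_le {a : ℝ≥0} (ha : a ≤ 1) (u : ℝ≥0) :
    Φ.toFun (a * u) ≤ (a : ℝ≥0∞) * Φ.toFun u := by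
  have h := Φ.convex' u 0 a (1 - a) (by simp [ha])
  simpa [Φ.map_zero'] using h

lemma mono : Monotone Φ.toFun := by
  intro s t hst
  rcases eq_or_ne t 0 with rfl | ht
  · simp [le_antisymm hst zero_le]
  · have h := Φ.scale_le (a := s / t) (div_le_one_of_le₀ hst zero_le) t
    rw [div_mul_cancel₀ _ ht] at h
    calc Φ.toFun s ≤ (s / t : ℝ≥0) * Φ.toFun t := h
      _ ≤ 1 * Φ.toFun t := by
          gcongr
          exact_mod_cast div_le_one_of_le₀ hst zero_le
      _ = Φ.toFun t := one_mul _

lemma scale_ge {K : ℝ≥0} (hK : 1 ≤ K) (u : ℝ≥0) :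
    (K : ℝ≥0∞) * Φ.toFun u ≤ Φ.toFun (K * u) := by
  have hK0 : K ≠ 0 := by positivity
  have h := Φ.scale_le (a := K⁻¹) (inv_le_one_of_one_le₀ hK) (K * u)
  rw [inv_mul_cancel_left₀ hK0] at h
  calc (K : ℝ≥0∞) * Φ.toFun u ≤ (K : ℝ≥0∞) * ((K⁻¹ : ℝ≥0) * Φ.toFun (K * u)) := by gcongr
    _ = Φ.toFun (K * u) := by
        rw [← mul_assoc, ← ENNReal.coe_mul, mul_inv_cancel₀ hK0]; simp

/-- If `Φ t ≤ s` then `t ≤ Φ⁻¹ s`. -/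
lemma le_inv {s : ℝ≥0∞} {t : ℝ≥0} (h : Φ.toFun t ≤ s) : (t : ℝ≥0∞) ≤ Φ.inv s := by
  refine le_sInf ?_
  rintro b ⟨r, hr, rfl⟩
  simp only [Set.mem_setOf_eq] at hr
  have : t ≤ r := by
    by_contra hc
    push_neg at hc
    exact absurd hr (not_lt.2 ((Φ.mono hc.le).trans h))
  exact ENNReal.coe_le_coe.2 this

/-- If `t < Φ⁻¹ s` then `Φ t ≤ s`. -/
lemma toFun_le_of_lt_inv {s : ℝ≥0∞} {t : ℝ≥0} (h : (t : ℝ≥0∞) < Φ.inv s) : Φ.toFun t ≤ s := by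
  by_contra hc
  exact absurd (sInf_le (Set.mem_image_of_mem _ (Set.mem_setOf_eq ▸ lt_of_not_ge hc))) h.not_ge

/-- If `Φ⁻¹ s < u` then `s < Φ u`. -/
lemma lt_toFun_of_inv_lt {s : ℝ≥0∞} {u : ℝ≥0} (h : Φ.inv s < (u : ℝ≥0∞)) : s < Φ.toFun u := by
  obtain ⟨b, ⟨r, hr, rfl⟩, hb⟩ := sInf_lt_iff.1 h
  simp only [Set.mem_setOf_eq] at hr
  have hb' : (r : ℝ≥0∞) < (u : ℝ≥0∞) := hb
  exact lt_of_lt_of_le hr (Φ.mono (by exact_mod_cast hb'.le))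

lemma inv_mono : Monotone Φ.inv := by
  intro s t hst
  exact sInf_le_sInf (Set.image_mono fun r hr => lt_of_le_of_lt hst hr)

lemma inv_lt_top {s : ℝ≥0∞} (hs : s < ⊤) : Φ.inv s < ⊤ := by
  have hev : ∀ᶠ r : ℝ≥0 in atTop, Φ.toFun r ∈ Set.Ioi s := Φ.tendsto_top' (Ioi_mem_nhds hs)
  obtain ⟨r, hr⟩ := hev.exists
  exact lt_of_le_of_lt (sInf_le (Set.mem_image_of_mem _ hr)) ENNReal.coe_lt_top

/-- Scaling: `Φ⁻¹(K u) ≤ K Φ⁻¹(u)` for `1 ≤ K < ∞`. -/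
lemma inv_scale {K : ℝ≥0∞} (hK1 : 1 ≤ K) (hKt : K ≠ ⊤) (u : ℝ≥0∞) :
    Φ.inv (K * u) ≤ K * Φ.inv u := by
  have hK0 : K ≠ 0 := by intro h; simp [h] at hK1
  set K' : ℝ≥0 := K.toNNReal with hK'
  have hKK : (K' : ℝ≥0∞) = K := ENNReal.coe_toNNReal hKt
  have h1K : 1 ≤ K' := by rw [← ENNReal.coe_le_coe, hKK]; exact_mod_cast hK1
  have key : ∀ r : ℝ≥0, r ∈ {r : ℝ≥0 | u < Φ.toFun r} → Φ.inv (K * u) ≤ K * r := by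
    intro r hr
    simp only [Set.mem_setOf_eq] at hr
    have hmem : K * u < Φ.toFun (K' * r) := by
      refine lt_of_lt_of_le ?_ (Φ.scale_ge h1K r)
      conv_lhs => rw [← hKK]
      exact ENNReal.mul_lt_mul_right (by simpa [hKK] using hK0) (by simp) hr
    calc Φ.inv (K * u) ≤ ((K' * r : ℝ≥0) : ℝ≥0∞) := sInf_le (Set.mem_image_of_mem _ hmem)
      _ = K * r := by rw [ENNReal.coe_mul, hKK]
  have hdiv : Φ.inv (K * u) / K ≤ Φ.inv u := by
    refine le_sInf ?_
    rintro b ⟨r, hr, rfl⟩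
    rw [ENNReal.div_le_iff hK0 hKt]
    exact (key r hr).trans_eq (mul_comm _ _)
  rw [ENNReal.div_le_iff hK0 hKt] at hdiv
  exact hdiv.trans_eq (mul_comm _ _)

/-- `Φ` is degenerate if it is `⊤` on all of `(0,∞)`. -/
def Degenerate (Φ : YoungFunction) : Prop := ∀ r : ℝ≥0, 0 < r → Φ.toFun r = ⊤

lemma inv_eq_zero_of_degenerate (hd : Φ.Degenerate) {s : ℝ≥0∞} (hs : s ≠ ⊤) : Φ.inv s = 0 := by
  refine le_antisymm ?_ zero_le
  refine ENNReal.le_of_forall_pos_le_add fun ε hε _ => ?_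
  have hmem : s < Φ.toFun ε := by rw [hd ε hε]; exact lt_top_iff_ne_top.2 hs
  refine le_trans (sInf_le (Set.mem_image_of_mem (fun r : ℝ≥0 => (r : ℝ≥0∞)) hmem)) ?_
  simp

lemma inv_pos_of_not_degenerate (hd : ¬ Φ.Degenerate) {s : ℝ≥0∞} (hs0 : 0 < s) :
    0 < Φ.inv s := by
  by_contra hc
  push_neg at hc
  have hinv0 : Φ.inv s = 0 := le_antisymm (by simpa using hc) zero_le
  have hall : ∀ u : ℝ≥0, 0 < u → s < Φ.toFun u := by
    intro u hu
    exact Φ.lt_toFun_of_inv_lt (by rw [hinv0]; exact_mod_cast hu)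
  simp only [Degenerate, not_forall] at hd
  obtain ⟨r₀, hr₀, hΦr₀⟩ := hd
  rcases eq_or_ne s ⊤ with rfl | hstop
  · exact absurd (hall r₀ hr₀) (by simp)
  rcases eq_or_ne (Φ.toFun r₀) 0 with h0 | hne0
  · have := hall r₀ hr₀
    rw [h0] at this
    exact absurd this (by simp)
  obtain ⟨ε, hε, hεlt⟩ := ENNReal.exists_nnreal_pos_mul_lt hΦr₀ hs0.ne'
  set ε' : ℝ≥0 := min ε 1 with hε'
  have hε'0 : 0 < ε' := lt_min hε one_pos
  have h1 : Φ.toFun (ε' * r₀) ≤ (ε' : ℝ≥0∞) * Φ.toFun r₀ := Φ.scale_le (min_le_right _ _) r₀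
  have h2 : (ε' : ℝ≥0∞) * Φ.toFun r₀ < s := by
    refine lt_of_le_of_lt ?_ hεlt
    gcongr
    exact_mod_cast min_le_left _ _
  exact absurd (hall (ε' * r₀) (by positivity)) (not_lt.2 (h1.trans h2.le))

end YoungFunction
namespace YoungFunction

variable (Φ : YoungFunction)

lemma ext_zero : Φ.ext 0 = 0 := by simp [ext, Φ.map_zero']

lemma ext_coe (u : ℝ≥0) : Φ.ext u = Φ.toFun u := by simp [ext]

lemma ext_mono : Monotone Φ.ext := by
  intro u v huv
  rcases eq_or_ne v ⊤ with rfl | hv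
  · simp [ext]
  rcases eq_or_ne u ⊤ with rfl | hu
  · exact absurd (top_le_iff.1 huv) hv
  simp only [ext, hu, hv, if_false]
  exact Φ.mono (ENNReal.toNNReal_mono hv huv)

lemma ext_scale_le {a : ℝ≥0} (ha : a ≤ 1) (u : ℝ≥0∞) :
    Φ.ext ((a : ℝ≥0∞) * u) ≤ (a : ℝ≥0∞) * Φ.ext u := by
  rcases eq_or_ne a 0 with rfl | ha0
  · simp [ext, Φ.map_zero']
  rcases eq_or_ne u ⊤ with rfl | hu
  · rw [ENNReal.mul_top (by exact_mod_cast ha0)]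
    simp only [ext, if_true]
    exact le_trans le_top (le_of_eq (ENNReal.mul_top (by exact_mod_cast ha0)).symm)
  have hfin : (a : ℝ≥0∞) * u ≠ ⊤ := ENNReal.mul_ne_top ENNReal.coe_ne_top hu
  simp only [ext, hfin, hu, if_false]
  rw [ENNReal.toNNReal_mul, ENNReal.toNNReal_coe]
  exact Φ.scale_le ha u.toNNReal

end YoungFunction

section LuxLemmas

variable {X : Type*} [MeasurableSpace X] (Φ : YoungFunction) (μ : Measure X)

lemma top_mem_luxSet (E : Set X) (g : X → ℝ≥0∞) :
    (⊤ : ℝ≥0∞) ∈ {lam : ℝ≥0∞ | 0 < lam ∧ ∫⁻ x in E, Φ.ext (g x / lam) ∂μ ≤ 1} := by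
  refine ⟨by simp, ?_⟩
  simp [ENNReal.div_top, Φ.ext_zero]

lemma luxNormE_mono_set {E E' : Set X} (h : E ⊆ E') (g : X → ℝ≥0∞) :
    luxNormE Φ μ E g ≤ luxNormE Φ μ E' g := by
  refine sInf_le_sInf fun lam ⟨h0, hint⟩ => ⟨h0, le_trans ?_ hint⟩
  exact lintegral_mono' (Measure.restrict_mono h le_rfl) le_rfl

/-- The Hölder-type bound: `∫_E g ≤ 4 Φ⁻¹((μE)⁻¹) μE ‖g‖_{L_Φ(E)}`. -/
lemma lintegral_le_luxNormE {E : Set X} (hE0 : μ E ≠ 0) (hEt : μ E ≠ ⊤)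
    (g : X → ℝ≥0∞) (hg : ∀ x, g x ≠ ⊤)
    (hτ0 : 0 < Φ.inv (μ E)⁻¹) (hτt : Φ.inv (μ E)⁻¹ ≠ ⊤) :
    ∫⁻ x in E, g x ∂μ ≤ 4 * Φ.inv (μ E)⁻¹ * μ E * luxNormE Φ μ E g := by
  set τ : ℝ≥0∞ := Φ.inv (μ E)⁻¹ with hτ
  set σ : ℝ≥0 := 2 * τ.toNNReal with hσ
  have hcoeσ : (σ : ℝ≥0∞) = 2 * τ := by
    rw [hσ, ENNReal.coe_mul, ENNReal.coe_toNNReal hτt]; norm_num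
  have hσ0 : σ ≠ 0 := by
    rw [hσ]
    simp only [ne_eq, mul_eq_zero, OfNat.ofNat_ne_zero, false_or]
    exact fun h => absurd (ENNReal.toNNReal_eq_zero_iff _ |>.1 h)
      (by simp [hτ0.ne', hτt])
  have hτσ : τ < (σ : ℝ≥0∞) := by
    rw [hcoeσ, two_mul]
    exact ENNReal.lt_add_right hτt hτ0.ne'
  -- pointwise bound
  have P : ∀ u : ℝ≥0, (u : ℝ≥0∞) ≤ (σ : ℝ≥0∞) + σ * μ E * Φ.toFun u := by
    intro u
    rcases le_total u σ with hu | hu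
    · exact le_add_right (by exact_mod_cast hu)
    have hu0 : u ≠ 0 := fun h => hσ0 (le_antisymm (h ▸ hu) zero_le)
    have hslope : Φ.toFun σ ≤ ((σ / u : ℝ≥0) : ℝ≥0∞) * Φ.toFun u := by
      have := Φ.scale_le (a := σ / u) (div_le_one_of_le₀ hu zero_le) u
      rwa [div_mul_cancel₀ _ hu0] at this
    have hΦσ : (μ E)⁻¹ < Φ.toFun σ := Φ.lt_toFun_of_inv_lt hτσ
    have h1 : (1 : ℝ≥0∞) ≤ ((σ / u : ℝ≥0) : ℝ≥0∞) * Φ.toFun u * μ E := by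
      calc (1 : ℝ≥0∞) = (μ E)⁻¹ * μ E := (ENNReal.inv_mul_cancel hE0 hEt).symm
        _ ≤ ((σ / u : ℝ≥0) : ℝ≥0∞) * Φ.toFun u * μ E := by gcongr; exact (hΦσ.le.trans hslope)
    have hcoediv : ((σ / u : ℝ≥0) : ℝ≥0∞) = (σ : ℝ≥0∞) / u := ENNReal.coe_div hu0
    have : (u : ℝ≥0∞) ≤ σ * μ E * Φ.toFun u := by
      calc (u : ℝ≥0∞) = u * 1 := (mul_one _).symm
        _ ≤ u * (((σ / u : ℝ≥0) : ℝ≥0∞) * Φ.toFun u * μ E) := by gcongr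
        _ = (u * ((σ : ℝ≥0∞) / u)) * (Φ.toFun u * μ E) := by rw [hcoediv]; ring
        _ = σ * μ E * Φ.toFun u := by
            rw [ENNReal.mul_div_cancel (by exact_mod_cast hu0) ENNReal.coe_ne_top]; ring
    exact this.trans le_add_self
  -- for each admissible lam
  have key : ∀ lam ∈ {lam : ℝ≥0∞ | 0 < lam ∧ ∫⁻ x in E, Φ.ext (g x / lam) ∂μ ≤ 1},
      ∫⁻ x in E, g x ∂μ ≤ (2 * σ * μ E) * lam := by
    rintro lam ⟨hlam0, hlamint⟩
    rcases eq_or_ne lam ⊤ with rfl | hlamt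
    · rw [ENNReal.mul_top (by simp [hσ0, hE0])]
      exact le_top
    have hptw : ∀ x, g x / lam ≤ (σ : ℝ≥0∞) + σ * μ E * Φ.ext (g x / lam) := by
      intro x
      have hfin : g x / lam ≠ ⊤ := by
        simp [ENNReal.div_eq_top, hg x, hlam0.ne']
      have := P (g x / lam).toNNReal
      rw [ENNReal.coe_toNNReal hfin] at this
      have hext : Φ.ext (g x / lam) = Φ.toFun (g x / lam).toNNReal := by
        simp [YoungFunction.ext, hfin]
      rwa [hext]
    have hint2 : ∫⁻ x in E, g x / lam ∂μ ≤ 2 * σ * μ E := by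
      calc ∫⁻ x in E, g x / lam ∂μ
          ≤ ∫⁻ x in E, ((σ : ℝ≥0∞) + σ * μ E * Φ.ext (g x / lam)) ∂μ :=
            lintegral_mono fun x => hptw x
        _ = (σ : ℝ≥0∞) * μ E + σ * μ E * ∫⁻ x in E, Φ.ext (g x / lam) ∂μ := by
            rw [lintegral_add_left measurable_const, setLIntegral_const,
              lintegral_const_mul' _ _ (ENNReal.mul_ne_top ENNReal.coe_ne_top hEt)]
        _ ≤ (σ : ℝ≥0∞) * μ E + σ * μ E * 1 := by gcongr
        _ = 2 * σ * μ E := by ring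
    have hdiv : (∫⁻ x in E, g x ∂μ) / lam ≤ 2 * σ * μ E := by
      rw [div_eq_mul_inv, ← lintegral_mul_const' _ _ (by simp [hlam0.ne'])]
      simpa [div_eq_mul_inv] using hint2
    rw [ENNReal.div_le_iff hlam0.ne' hlamt] at hdiv
    exact hdiv
  -- pass to the infimum
  have hc0 : (2 * σ * μ E : ℝ≥0∞) ≠ 0 := by simp [hσ0, hE0]
  have hct : (2 * σ * μ E : ℝ≥0∞) ≠ ⊤ := by
    exact ENNReal.mul_ne_top (ENNReal.mul_ne_top (by simp) ENNReal.coe_ne_top) hEt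
  have hfinal : ∫⁻ x in E, g x ∂μ ≤ (2 * σ * μ E) * luxNormE Φ μ E g := by
    have : (∫⁻ x in E, g x ∂μ) / (2 * σ * μ E) ≤ luxNormE Φ μ E g := by
      refine le_sInf fun lam hlam => ?_
      rw [ENNReal.div_le_iff hc0 hct]
      exact (key lam hlam).trans_eq (mul_comm _ _)
    rw [ENNReal.div_le_iff hc0 hct] at this
    exact this.trans_eq (mul_comm _ _)
  calc ∫⁻ x in E, g x ∂μ ≤ (2 * σ * μ E) * luxNormE Φ μ E g := hfinal
    _ = 4 * Φ.inv (μ E)⁻¹ * μ E * luxNormE Φ μ E g := by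
        rw [mul_comm (2 : ℝ≥0∞) (σ : ℝ≥0∞), hcoeσ, ← hτ]; ring

end LuxLemmas
namespace YoungFunction
lemma ext_half (Φ : YoungFunction) (u : ℝ≥0∞) :
    Φ.ext ((2 : ℝ≥0∞)⁻¹ * u) ≤ (2 : ℝ≥0∞)⁻¹ * Φ.ext u := by
  have h := Φ.ext_scale_le (a := 2⁻¹) (by norm_num) u
  have hc : ((2⁻¹ : ℝ≥0) : ℝ≥0∞) = (2 : ℝ≥0∞)⁻¹ := by
    rw [ENNReal.coe_inv (by norm_num)]; norm_num
  rwa [hc] at h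
end YoungFunction

section LuxLemmas2

variable {X : Type*} [MeasurableSpace X] (Φ : YoungFunction) (μ : Measure X)

lemma luxNormE_zero_fun (E : Set X) : luxNormE Φ μ E (fun _ => 0) = 0 := by
  refine le_antisymm ?_ zero_le
  refine ENNReal.le_of_forall_pos_le_add fun ε hε _ => ?_
  rw [zero_add]
  refine sInf_le ⟨by exact_mod_cast hε, ?_⟩
  simp [ENNReal.zero_div, Φ.ext_zero]

/-- Luxemburg norm of a constant: `‖K‖_{L_Φ(E)} * Φ⁻¹((μE)⁻¹) ≤ K`. -/
lemma luxNormE_const_mul_le {E : Set X} (hE0 : μ E ≠ 0) (hEt : μ E ≠ ⊤)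
    {K : ℝ≥0∞} (hKt : K ≠ ⊤)
    (hτ0 : 0 < Φ.inv (μ E)⁻¹) (hτt : Φ.inv (μ E)⁻¹ ≠ ⊤) :
    luxNormE Φ μ E (fun _ => K) * Φ.inv (μ E)⁻¹ ≤ K := by
  set I : ℝ≥0∞ := Φ.inv (μ E)⁻¹ with hI
  set L : ℝ≥0∞ := luxNormE Φ μ E (fun _ => K) with hL
  rcases eq_or_ne K 0 with rfl | hK0
  · rw [hL, luxNormE_zero_fun, zero_mul]
  have claim : ∀ t : ℝ≥0, 0 < t → (t : ℝ≥0∞) < I → L ≤ K / t := by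
    intro t ht0 htI
    refine sInf_le ⟨ENNReal.div_pos hK0 ENNReal.coe_ne_top, ?_⟩
    have hKdiv : K / (K / (t : ℝ≥0∞)) = (t : ℝ≥0∞) := by
      rw [div_eq_mul_inv K ((t : ℝ≥0∞)), div_eq_mul_inv,
        ENNReal.mul_inv (Or.inl hK0) (Or.inl hKt), inv_inv, ← mul_assoc,
        ENNReal.mul_inv_cancel hK0 hKt, one_mul]
    show ∫⁻ _ in E, Φ.ext (K / (K / (t : ℝ≥0∞))) ∂μ ≤ 1
    rw [hKdiv]
    have hΦt : Φ.toFun t ≤ (μ E)⁻¹ := Φ.toFun_le_of_lt_inv htI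
    calc ∫⁻ _ in E, Φ.ext t ∂μ = Φ.toFun t * μ E := by
          rw [setLIntegral_const, Φ.ext_coe]
      _ ≤ (μ E)⁻¹ * μ E := by gcongr
      _ = 1 := ENNReal.inv_mul_cancel hE0 hEt
  by_contra hcon
  push_neg at hcon
  have hL0 : L ≠ 0 := by
    intro h
    rw [h, zero_mul] at hcon
    exact absurd hcon (by simp)
  have hLt : L ≠ ⊤ := by
    obtain ⟨x, hx0, hxI⟩ := exists_between hτ0
    have hxt : x ≠ ⊤ := (hxI.trans (lt_top_iff_ne_top.2 hτt)).ne
    have hx0' : x ≠ 0 := hx0.ne'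
    have htnn : x.toNNReal ≠ 0 := by simp [ENNReal.toNNReal_eq_zero_iff, hxt, hx0']
    have := claim x.toNNReal (pos_iff_ne_zero.2 htnn) (by rwa [ENNReal.coe_toNNReal hxt])
    exact (this.trans_lt (ENNReal.div_lt_top hKt (by exact_mod_cast htnn))).ne
  have h1 : K / L < I := by
    rw [ENNReal.div_lt_iff (Or.inl hL0) (Or.inl hLt)]
    exact lt_of_lt_of_le hcon (le_of_eq (mul_comm _ _))
  obtain ⟨x, hx1, hx2⟩ := exists_between h1
  have hxt : x ≠ ⊤ := (hx2.trans (lt_top_iff_ne_top.2 hτt)).ne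
  have hx0 : 0 < x := lt_of_le_of_lt zero_le hx1
  set t : ℝ≥0 := x.toNNReal with htdef
  have hct : (t : ℝ≥0∞) = x := ENNReal.coe_toNNReal hxt
  have ht0 : 0 < t :=
    pos_iff_ne_zero.2 (by simp [htdef, ENNReal.toNNReal_eq_zero_iff, hxt, hx0.ne'])
  have hLle : L ≤ K / t := claim t ht0 (by rwa [hct])
  have hKtL : K / t < L := by
    rw [ENNReal.div_lt_iff (Or.inl (by exact_mod_cast ht0.ne')) (Or.inl ENNReal.coe_ne_top)]
    rw [hct]
    rw [ENNReal.div_lt_iff (Or.inl hL0) (Or.inl hLt)] at hx1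
    exact hx1.trans_eq (mul_comm _ _)
  exact absurd hLle hKtL.not_ge

/-- Quasi-triangle inequality for a function dominated by `h₁ + const D`. -/
lemma luxNormE_le_add_const {E : Set X} (hE : MeasurableSet E)
    (h h₁ : X → ℝ≥0∞) (D : ℝ≥0∞) (hpt : ∀ y ∈ E, h y ≤ h₁ y + D) :
    luxNormE Φ μ E h ≤ 4 * luxNormE Φ μ E h₁ + 4 * luxNormE Φ μ E (fun _ => D) := by
  have key : ∀ lam₁ ∈ {lam : ℝ≥0∞ | 0 < lam ∧ ∫⁻ x in E, Φ.ext (h₁ x / lam) ∂μ ≤ 1},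
      ∀ lam₂ ∈ {lam : ℝ≥0∞ | 0 < lam ∧ ∫⁻ x in E, Φ.ext ((fun _ : X => D) x / lam) ∂μ ≤ 1},
      luxNormE Φ μ E h ≤ 4 * lam₁ + 4 * lam₂ := by
    rintro lam₁ ⟨h10, h1int⟩ lam₂ ⟨h20, h2int⟩
    simp only at h1int h2int
    rcases eq_or_ne (lam₁ + lam₂) ⊤ with htop | hfin
    · rcases ENNReal.add_eq_top.1 htop with rfl | rfl
      · rw [ENNReal.mul_top (by norm_num)]; exact le_trans le_top (le_add_right le_rfl)
      · rw [ENNReal.mul_top (by norm_num)]; exact le_trans le_top (le_add_left le_rfl)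
    set Λ : ℝ≥0∞ := lam₁ + lam₂ with hΛ
    have hΛ0 : Λ ≠ 0 := by
      rw [hΛ]
      exact fun hh => h10.ne' (add_eq_zero.1 hh).1
    have hΛt : Λ ≠ ⊤ := hfin
    have h1Λ : lam₁ ≤ Λ := le_add_right le_rfl
    have h2Λ : lam₂ ≤ Λ := le_add_left le_rfl
    have halfstep : ∀ u lam : ℝ≥0∞, lam ≤ Λ →
        (u + u) / (4 * Λ) ≤ (2 : ℝ≥0∞)⁻¹ * (u / lam) := by
      intro u lam hlΛ
      calc (u + u) / (4 * Λ) = (2 * u) / (2 * (2 * Λ)) := by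
            rw [← two_mul, show (4 : ℝ≥0∞) * Λ = 2 * (2 * Λ) by ring]
        _ = u / (2 * Λ) := ENNReal.mul_div_mul_left _ _ (by norm_num) (by norm_num)
        _ = (2 : ℝ≥0∞)⁻¹ * (u / Λ) := by
            rw [div_eq_mul_inv, div_eq_mul_inv,
              ENNReal.mul_inv (Or.inl (by norm_num)) (Or.inl (by norm_num))]
            ring
        _ ≤ (2 : ℝ≥0∞)⁻¹ * (u / lam) := by
            gcongr
    have hptw : ∀ y ∈ E, Φ.ext (h y / (4 * Λ)) ≤
        (2 : ℝ≥0∞)⁻¹ * Φ.ext (D / lam₂) + (2 : ℝ≥0∞)⁻¹ * Φ.ext (h₁ y / lam₁) := by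
      intro y hy
      rcases le_total (h₁ y) D with hcase | hcase
      · have hle : h y / (4 * Λ) ≤ (2 : ℝ≥0∞)⁻¹ * (D / lam₂) := by
          refine le_trans ?_ (halfstep D lam₂ h2Λ)
          gcongr
          exact (hpt y hy).trans (by gcongr)
        calc Φ.ext (h y / (4 * Λ)) ≤ Φ.ext ((2 : ℝ≥0∞)⁻¹ * (D / lam₂)) := Φ.ext_mono hle
          _ ≤ (2 : ℝ≥0∞)⁻¹ * Φ.ext (D / lam₂) := Φ.ext_half _
          _ ≤ _ := le_add_right le_rfl
      · have hle : h y / (4 * Λ) ≤ (2 : ℝ≥0∞)⁻¹ * (h₁ y / lam₁) := by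
          refine le_trans ?_ (halfstep (h₁ y) lam₁ h1Λ)
          gcongr
          exact (hpt y hy).trans (by gcongr)
        calc Φ.ext (h y / (4 * Λ)) ≤ Φ.ext ((2 : ℝ≥0∞)⁻¹ * (h₁ y / lam₁)) := Φ.ext_mono hle
          _ ≤ (2 : ℝ≥0∞)⁻¹ * Φ.ext (h₁ y / lam₁) := Φ.ext_half _
          _ ≤ _ := le_add_left le_rfl
    have h2int' : Φ.ext (D / lam₂) * μ E ≤ 1 := by
      rw [← setLIntegral_const E]
      exact h2int
    have hint : ∫⁻ y in E, Φ.ext (h y / (4 * Λ)) ∂μ ≤ 1 := by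
      calc ∫⁻ y in E, Φ.ext (h y / (4 * Λ)) ∂μ
          ≤ ∫⁻ y in E, ((2 : ℝ≥0∞)⁻¹ * Φ.ext (D / lam₂) + (2 : ℝ≥0∞)⁻¹ * Φ.ext (h₁ y / lam₁)) ∂μ :=
            lintegral_mono_ae ((ae_restrict_mem hE).mono hptw)
        _ = (2 : ℝ≥0∞)⁻¹ * Φ.ext (D / lam₂) * μ E
            + (2 : ℝ≥0∞)⁻¹ * ∫⁻ y in E, Φ.ext (h₁ y / lam₁) ∂μ := by
            rw [lintegral_add_left measurable_const, setLIntegral_const,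
              lintegral_const_mul' _ _ (by norm_num)]
        _ ≤ (2 : ℝ≥0∞)⁻¹ * 1 + (2 : ℝ≥0∞)⁻¹ * 1 := by
            refine add_le_add ?_ ?_
            · rw [mul_assoc]
              exact mul_le_mul_right h2int' _
            · exact mul_le_mul_right h1int _
        _ = 1 := by
            rw [mul_one, ← two_mul, ENNReal.mul_inv_cancel (by norm_num) (by norm_num)]
    have : luxNormE Φ μ E h ≤ 4 * Λ :=
      sInf_le ⟨pos_iff_ne_zero.2 (mul_ne_zero (by norm_num) hΛ0), hint⟩
    rw [hΛ, mul_add] at this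
    exact this
  -- pass to infima
  refine ENNReal.le_of_forall_pos_le_add fun ε hε hlt => ?_
  set L₁ : ℝ≥0∞ := luxNormE Φ μ E h₁ with hL₁
  set L₂ : ℝ≥0∞ := luxNormE Φ μ E (fun _ => D) with hL₂
  have hL₁t : L₁ ≠ ⊤ := by
    intro hh
    rw [hh] at hlt
    simp [ENNReal.mul_top] at hlt
  have hL₂t : L₂ ≠ ⊤ := by
    intro hh
    rw [hh] at hlt
    simp [ENNReal.mul_top] at hlt
  set δ : ℝ≥0∞ := (ε : ℝ≥0∞) / 8 with hδ
  have hδ0 : δ ≠ 0 := by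
    simp [hδ, ENNReal.div_eq_zero_iff]
    exact_mod_cast hε.ne'
  obtain ⟨lam₁, hlam₁S, hlam₁⟩ := sInf_lt_iff.1 (ENNReal.lt_add_right hL₁t hδ0)
  obtain ⟨lam₂, hlam₂S, hlam₂⟩ := sInf_lt_iff.1 (ENNReal.lt_add_right hL₂t hδ0)
  calc luxNormE Φ μ E h ≤ 4 * lam₁ + 4 * lam₂ := key lam₁ hlam₁S lam₂ hlam₂S
    _ ≤ 4 * (L₁ + δ) + 4 * (L₂ + δ) := by gcongr <;> [exact hlam₁.le; exact hlam₂.le]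
    _ = 4 * L₁ + 4 * L₂ + 8 * δ := by ring
    _ = 4 * L₁ + 4 * L₂ + ε := by
        rw [hδ, ENNReal.mul_div_cancel (by norm_num) (by norm_num)]

lemma luxNorm_indicator (E : Set X) (hE : MeasurableSet E) (f : X → ℝ) :
    luxNorm Φ μ Set.univ (E.indicator f) = luxNormE Φ μ E (fun x => (‖f x‖₊ : ℝ≥0∞)) := by
  unfold luxNorm luxNormE
  congr 1
  ext lam
  simp only [Set.mem_setOf_eq, and_congr_right_iff]
  intro hlam
  rw [Measure.restrict_univ, ← lintegral_indicator hE]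
  constructor <;> intro hh <;> refine le_trans (le_of_eq (lintegral_congr fun x => ?_)) hh
  · by_cases hx : x ∈ E
    · simp [Set.indicator_of_mem hx]
    · simp [Set.indicator_of_notMem hx, Φ.ext_zero, ENNReal.zero_div]
  · by_cases hx : x ∈ E
    · simp [Set.indicator_of_mem hx]
    · simp [Set.indicator_of_notMem hx, Φ.ext_zero, ENNReal.zero_div]

end LuxLemmas2
/-- Spanne type boundedness of `M_α` from the Orlicz–Morrey space
`M_{Φ,λ₁}(ℝⁿ)` to `M_{Ψ,λ₂}(ℝⁿ)`. -/
theorem fracMaximal_orliczMorreyLam_bounded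
    (n : ℕ) (α : ℝ) (hα0 : 0 ≤ α) (hαn : α < n)
    (lam₁ lam₂ : ℝ) (hlam₁0 : 0 ≤ lam₁) (hlam₁n : lam₁ < n)
    (hlam₂0 : 0 ≤ lam₂) (hlam₂n : lam₂ < n)
    (Φ Ψ : YoungFunction)
    (A : ℝ) (hA : 0 < A)
    (hbdd : ∀ g : En n → ℝ,
      luxNormE Ψ volume Set.univ (fracMaximal n α g) ≤
        ENNReal.ofReal A * luxNorm Φ volume Set.univ g)
    (c : ℝ) (hc : 0 < c)
    (hinv : ∀ t : ℝ≥0∞, 0 < t → t ≠ ⊤ →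
      Φ.inv t ≤ ENNReal.ofReal c * t ^ (α / (n : ℝ)) * Ψ.inv t)
    (C : ℝ) (hC : 0 < C)
    (hcond : ∀ r : ℝ, 0 < r →
      (⨆ (t : ℝ) (_ : r < t),
        Ψ.inv (ENNReal.ofReal t ^ (-(n : ℝ))) / Φ.inv (ENNReal.ofReal t ^ (-lam₁))) ≤
        ENNReal.ofReal C *
          (Ψ.inv (ENNReal.ofReal r ^ (-(n : ℝ))) / Ψ.inv (ENNReal.ofReal r ^ (-lam₂)))) :
    ∃ C' : ℝ, 0 < C' ∧ ∀ f : En n → ℝ, LocallyIntegrable f volume →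
      morreyLamNormE n Ψ lam₂ (fracMaximal n α f) ≤
        ENNReal.ofReal C' * morreyLamNorm n Φ lam₁ f := by
  have hn : 0 < n := by exact_mod_cast hα0.trans_lt hαn
  -- helper for finiteness of the rpow arguments
  have hrpow_ne_top : ∀ (s β : ℝ), 0 < s → ENNReal.ofReal s ^ (-β) ≠ ⊤ := by
    intro s β hs
    rw [Ne, ENNReal.rpow_eq_top_iff]
    push_neg
    constructor
    · intro h0; exact absurd h0 (by simp [hs, ENNReal.ofReal_eq_zero, not_le])
    · intro ht; exact absurd ht ENNReal.ofReal_ne_top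
  have hrpow_pos : ∀ (s β : ℝ), 0 < s → 0 < ENNReal.ofReal s ^ (-β) :=
    fun s β hs => ENNReal.rpow_pos (by simp [hs]) ENNReal.ofReal_ne_top
  -- Case: Ψ degenerate
  by_cases hΨdeg : Ψ.Degenerate
  · refine ⟨1, one_pos, fun f _ => ?_⟩
    refine le_trans (iSup_le fun x => iSup_le fun r => iSup_le fun hr => ?_) zero_le
    rw [Ψ.inv_eq_zero_of_degenerate hΨdeg (hrpow_ne_top r lam₂ hr), zero_mul]
  -- Ψ nondegenerate; then Φ is nondegenerate
  have hΨpos : ∀ s : ℝ≥0∞, 0 < s → s ≠ ⊤ → 0 < Ψ.inv s ∧ Ψ.inv s ≠ ⊤ :=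
    fun s hs0 hst => ⟨Ψ.inv_pos_of_not_degenerate hΨdeg hs0,
      (Ψ.inv_lt_top (lt_top_iff_ne_top.2 hst)).ne⟩
  have hΦdeg : ¬ Φ.Degenerate := by
    intro hdeg
    have h1 := hcond 1 one_pos
    have hterm : Ψ.inv (ENNReal.ofReal 2 ^ (-(n : ℝ))) / Φ.inv (ENNReal.ofReal 2 ^ (-lam₁)) ≤
        ⨆ (t : ℝ) (_ : (1:ℝ) < t),
          Ψ.inv (ENNReal.ofReal t ^ (-(n : ℝ))) / Φ.inv (ENNReal.ofReal t ^ (-lam₁)) :=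
      le_iSup_of_le 2 (le_iSup_of_le one_lt_two le_rfl)
    rw [Φ.inv_eq_zero_of_degenerate hdeg (hrpow_ne_top 2 lam₁ two_pos)] at hterm
    have hΨ2 := hΨpos _ (hrpow_pos 2 (n:ℝ) two_pos) (hrpow_ne_top 2 (n:ℝ) two_pos)
    rw [ENNReal.div_zero hΨ2.1.ne'] at hterm
    have htop : (⊤ : ℝ≥0∞) ≤ ENNReal.ofReal C *
        (Ψ.inv (ENNReal.ofReal 1 ^ (-(n : ℝ))) / Ψ.inv (ENNReal.ofReal 1 ^ (-lam₂))) :=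
      le_trans hterm h1
    have hΨ1n := hΨpos _ (hrpow_pos 1 (n:ℝ) one_pos) (hrpow_ne_top 1 (n:ℝ) one_pos)
    have hΨ1l := hΨpos _ (hrpow_pos 1 lam₂ one_pos) (hrpow_ne_top 1 lam₂ one_pos)
    have : ENNReal.ofReal C *
        (Ψ.inv (ENNReal.ofReal 1 ^ (-(n : ℝ))) / Ψ.inv (ENNReal.ofReal 1 ^ (-lam₂))) < ⊤ := by
      refine ENNReal.mul_lt_top ENNReal.ofReal_lt_top ?_
      exact ENNReal.div_lt_top hΨ1n.2 hΨ1l.1.ne'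
    exact absurd (lt_of_le_of_lt htop this) (lt_irrefl ⊤)
  have hΦpos : ∀ s : ℝ≥0∞, 0 < s → s ≠ ⊤ → 0 < Φ.inv s ∧ Φ.inv s ≠ ⊤ :=
    fun s hs0 hst => ⟨Φ.inv_pos_of_not_degenerate hΦdeg hs0,
      (Φ.inv_lt_top (lt_top_iff_ne_top.2 hst)).ne⟩
  -- dimensional constants
  haveI : Nonempty (Fin n) := ⟨⟨0, hn⟩⟩
  set v : ℝ≥0∞ := volume (ball (0 : En n) 1) with hv
  have hv0 : v ≠ 0 := (measure_ball_pos volume _ one_pos).ne'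
  have hvt : v ≠ ⊤ := measure_ball_lt_top.ne
  set K₀ : ℝ≥0∞ := max 1 v⁻¹ with hK₀
  set K₁ : ℝ≥0∞ := max 1 v with hK₁
  have hK₀1 : 1 ≤ K₀ := le_max_left _ _
  have hK₁1 : 1 ≤ K₁ := le_max_left _ _
  have hK₀t : K₀ ≠ ⊤ := by
    simp [hK₀, ENNReal.inv_ne_top, hv0]
  have hK₁t : K₁ ≠ ⊤ := by simp [hK₁, hvt]
  have hK₀0 : K₀ ≠ 0 := fun h => by simp [h] at hK₀1
  have hK₁0 : K₁ ≠ 0 := fun h => by simp [h] at hK₁1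
  set Γ : ℝ≥0∞ := 4 * ((2:ℝ≥0∞)^(n:ℕ) * ENNReal.ofReal C * ENNReal.ofReal A
    + 4 * ENNReal.ofReal c * K₀ * ENNReal.ofReal C * K₁) with hΓ
  have hΓt : Γ ≠ ⊤ := by
    rw [hΓ]
    refine ENNReal.mul_ne_top (by norm_num) (ENNReal.add_ne_top.2 ⟨?_, ?_⟩)
    · exact ENNReal.mul_ne_top (ENNReal.mul_ne_top (ENNReal.pow_ne_top (by norm_num))
        ENNReal.ofReal_ne_top) ENNReal.ofReal_ne_top
    · exact ENNReal.mul_ne_top (ENNReal.mul_ne_top (ENNReal.mul_ne_top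
        (ENNReal.mul_ne_top (by norm_num) ENNReal.ofReal_ne_top) hK₀t)
        ENNReal.ofReal_ne_top) hK₁t
  refine ⟨Γ.toReal + 1, by positivity, fun f _ => ?_⟩
  have hΓC' : Γ ≤ ENNReal.ofReal (Γ.toReal + 1) := by
    rw [← ENNReal.ofReal_toReal hΓt]
    exact ENNReal.ofReal_le_ofReal (by simp [ENNReal.toReal_nonneg])
  set N : ℝ≥0∞ := morreyLamNorm n Φ lam₁ f with hN
  rcases eq_or_ne N ⊤ with hNt | hNt
  · rw [hNt, ENNReal.mul_top (by positivity)]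
    exact le_top
  have hball : ∀ (z : En n) (s : ℝ), 0 < s →
      luxNormE Φ volume (ball z s) (fun y => (‖f y‖₊ : ℝ≥0∞))
        * Φ.inv (ENNReal.ofReal s ^ (-lam₁)) ≤ N := by
    intro z s hs
    rw [mul_comm]
    exact le_iSup_of_le z (le_iSup_of_le s (le_iSup_of_le hs le_rfl))
  -- now bound each term of the Morrey sup
  refine le_trans (iSup_le fun x => iSup_le fun r => iSup_le fun hr => ?_)
    (mul_le_mul_left hΓC' N)
  -- per-ball estimate
  set RlamArg : ℝ≥0∞ := ENNReal.ofReal r ^ (-lam₂) with hRlamArg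
  set Rnarg : ℝ≥0∞ := ENNReal.ofReal r ^ (-(n:ℝ)) with hRnarg
  set Rlam : ℝ≥0∞ := Ψ.inv RlamArg with hRlam
  set Rn : ℝ≥0∞ := Ψ.inv Rnarg with hRn
  have hRlampf : 0 < Rlam ∧ Rlam ≠ ⊤ := hΨpos _ (hrpow_pos r lam₂ hr) (hrpow_ne_top r lam₂ hr)
  have hRnpf : 0 < Rn ∧ Rn ≠ ⊤ := hΨpos _ (hrpow_pos r (n:ℝ) hr) (hrpow_ne_top r (n:ℝ) hr)
  set E₁ : ℝ≥0∞ := ⨆ (t : ℝ) (_ : r < t),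
    Ψ.inv (ENNReal.ofReal t ^ (-(n:ℝ))) / Φ.inv (ENNReal.ofReal t ^ (-lam₁)) with hE₁
  have hE₁le : E₁ ≤ ENNReal.ofReal C * (Rn / Rlam) := hcond r hr
  have hE₁t : E₁ ≠ ⊤ := (hE₁le.trans_lt (ENNReal.mul_lt_top ENNReal.ofReal_lt_top
    (ENNReal.div_lt_top hRnpf.2 hRlampf.1.ne'))).ne
  set D : ℝ≥0∞ := 4 * ENNReal.ofReal c * K₀ * N * E₁ with hD
  have hDt : D ≠ ⊤ := by
    rw [hD]
    exact ENNReal.mul_ne_top (ENNReal.mul_ne_top (ENNReal.mul_ne_top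
      (ENNReal.mul_ne_top (by norm_num) ENNReal.ofReal_ne_top) hK₀t) hNt) hE₁t
  set g : En n → ℝ := (ball x (2*r)).indicator f with hgdef
  -- the inverse-volume formula
  have hballinv : ∀ (z : En n) (s : ℝ), 0 < s →
      (volume (ball z s))⁻¹ = ENNReal.ofReal s ^ (-(n:ℝ)) * v⁻¹ := by
    intro z s hs
    have hvol : volume (ball z s) = ENNReal.ofReal s ^ ((n:ℕ):ℝ) * v := by
      rw [Measure.addHaar_ball volume z hs.le, ← hv,
        show Module.finrank ℝ (En n) = n from finrank_euclideanSpace_fin,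
        ENNReal.ofReal_pow hs.le, ← ENNReal.rpow_natCast]
    have hs0 : ENNReal.ofReal s ^ ((n:ℕ):ℝ) ≠ 0 :=
      (ENNReal.rpow_pos (by simp [hs]) ENNReal.ofReal_ne_top).ne'
    have hst : ENNReal.ofReal s ^ ((n:ℕ):ℝ) ≠ ⊤ := by
      rw [Ne, ENNReal.rpow_eq_top_iff]
      push_neg
      exact ⟨fun h0 => absurd h0 (by simp [hs, not_le]),
        fun ht => absurd ht ENNReal.ofReal_ne_top⟩
    rw [hvol, ENNReal.mul_inv (Or.inl hs0) (Or.inl hst), ENNReal.rpow_neg]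
  -- pointwise split of the fractional maximal function
  have hsplit : ∀ y ∈ ball x r, fracMaximal n α f y ≤ fracMaximal n α g y + D := by
    intro y hy
    unfold fracMaximal
    refine iSup_le fun t => iSup_le fun ht => ?_
    rcases le_or_gt t r with htr | htr
    · -- local part: integral over `ball y t` only sees `g`
      have hsub : ball y t ⊆ ball x (2*r) := by
        intro z hz
        rw [mem_ball] at hz hy ⊢
        calc dist z x ≤ dist z y + dist y x := dist_triangle _ _ _
          _ < t + r := add_lt_add hz hy
          _ ≤ 2*r := by linarith
      have hcongr : ∫⁻ z in ball y t, (‖f z‖₊ : ℝ≥0∞) = ∫⁻ z in ball y t, (‖g z‖₊ : ℝ≥0∞) := by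
        refine lintegral_congr_ae ((ae_restrict_mem measurableSet_ball).mono fun z hz => ?_)
        show ((‖f z‖₊ : ℝ≥0∞)) = ((‖g z‖₊ : ℝ≥0∞))
        rw [hgdef, Set.indicator_of_mem (hsub hz)]
      rw [hcongr]
      have hbx : volume (ball y t) ^ (α/(n:ℝ) - 1) * ∫⁻ z in ball y t, (‖g z‖₊ : ℝ≥0∞)
          ≤ fracMaximal n α g y := by
        calc volume (ball y t) ^ (α/(n:ℝ) - 1) * ∫⁻ z in ball y t, (‖g z‖₊ : ℝ≥0∞)
            ≤ ⨆ (_ : 0 < t), volume (ball y t) ^ (α/(n:ℝ) - 1)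
              * ∫⁻ z in ball y t, (‖g z‖₊ : ℝ≥0∞) :=
              le_iSup (fun _ : 0 < t => volume (ball y t) ^ (α/(n:ℝ) - 1)
                * ∫⁻ z in ball y t, (‖g z‖₊ : ℝ≥0∞)) ht
          _ ≤ fracMaximal n α g y := by
              unfold fracMaximal
              exact le_iSup (fun s : ℝ => ⨆ (_ : 0 < s), volume (ball y s) ^ (α/(n:ℝ) - 1)
                * ∫⁻ z in ball y s, (‖g z‖₊ : ℝ≥0∞)) t
      exact le_trans hbx le_self_add
    · -- tail part: the term is at most `D`
      have ht0 : 0 < t := hr.trans htr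
      set vB : ℝ≥0∞ := volume (ball y t) with hvB
      have hvB0 : vB ≠ 0 := (measure_ball_pos volume _ ht0).ne'
      have hvBt : vB ≠ ⊤ := measure_ball_lt_top.ne
      have hvBinv0 : 0 < vB⁻¹ := ENNReal.inv_pos.2 hvBt
      have hvBinvt : vB⁻¹ ≠ ⊤ := ENNReal.inv_ne_top.2 hvB0
      have hΦvB : 0 < Φ.inv vB⁻¹ ∧ Φ.inv vB⁻¹ ≠ ⊤ := hΦpos _ hvBinv0 hvBinvt
      set Lux : ℝ≥0∞ := luxNormE Φ volume (ball y t) (fun z => (‖f z‖₊ : ℝ≥0∞)) with hLux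
      have hH : ∫⁻ z in ball y t, (‖f z‖₊ : ℝ≥0∞) ≤ 4 * Φ.inv vB⁻¹ * vB * Lux :=
        lintegral_le_luxNormE Φ volume hvB0 hvBt _ (fun z => ENNReal.coe_ne_top) hΦvB.1 hΦvB.2
      set Tn : ℝ≥0∞ := ENNReal.ofReal t ^ (-(n:ℝ)) with hTn
      set Tlam : ℝ≥0∞ := ENNReal.ofReal t ^ (-lam₁) with hTlam
      have hTlampf : 0 < Φ.inv Tlam ∧ Φ.inv Tlam ≠ ⊤ :=
        hΦpos _ (hrpow_pos t lam₁ ht0) (hrpow_ne_top t lam₁ ht0)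
      have hlux : Lux ≤ N / Φ.inv Tlam := by
        rw [ENNReal.le_div_iff_mul_le (Or.inl hTlampf.1.ne') (Or.inl hTlampf.2)]
        exact hball y t ht0
      have hΨvB : Ψ.inv vB⁻¹ ≤ K₀ * Ψ.inv Tn := by
        refine le_trans (Ψ.inv_mono ?_) (Ψ.inv_scale hK₀1 hK₀t Tn)
        rw [hballinv y t ht0]
        rw [mul_comm]
        exact mul_le_mul_left (le_max_right _ _) _
      have hpow : vB ^ (α/(n:ℝ) - 1) * vB = vB ^ (α/(n:ℝ)) := by
        nth_rewrite 2 [← ENNReal.rpow_one vB]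
        rw [← ENNReal.rpow_add _ _ hvB0 hvBt, sub_add_cancel]
      have hcancel : vB ^ (α/(n:ℝ)) * (vB⁻¹) ^ (α/(n:ℝ)) = 1 := by
        rw [← ENNReal.mul_rpow_of_ne_top hvBt hvBinvt,
          ENNReal.mul_inv_cancel hvB0 hvBt, ENNReal.one_rpow]
      calc vB ^ (α/(n:ℝ) - 1) * ∫⁻ z in ball y t, (‖f z‖₊ : ℝ≥0∞)
          ≤ vB ^ (α/(n:ℝ) - 1) * (4 * Φ.inv vB⁻¹ * vB * Lux) := mul_le_mul_right hH _
        _ = 4 * (vB ^ (α/(n:ℝ) - 1) * vB) * Φ.inv vB⁻¹ * Lux := by ring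
        _ = 4 * vB ^ (α/(n:ℝ)) * Φ.inv vB⁻¹ * Lux := by rw [hpow]
        _ ≤ 4 * vB ^ (α/(n:ℝ)) * (ENNReal.ofReal c * (vB⁻¹) ^ (α/(n:ℝ)) * Ψ.inv vB⁻¹) * Lux := by
            gcongr
            exact hinv vB⁻¹ hvBinv0 hvBinvt
        _ = 4 * ENNReal.ofReal c * (vB ^ (α/(n:ℝ)) * (vB⁻¹) ^ (α/(n:ℝ))) * Ψ.inv vB⁻¹ * Lux := by
            ring
        _ = 4 * ENNReal.ofReal c * Ψ.inv vB⁻¹ * Lux := by rw [hcancel, mul_one]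
        _ ≤ 4 * ENNReal.ofReal c * (K₀ * Ψ.inv Tn) * (N / Φ.inv Tlam) := by gcongr
        _ = 4 * ENNReal.ofReal c * K₀ * N * (Ψ.inv Tn * (Φ.inv Tlam)⁻¹) := by
            rw [div_eq_mul_inv]; ring
        _ ≤ 4 * ENNReal.ofReal c * K₀ * N * E₁ := by
            gcongr
            rw [← div_eq_mul_inv]
            exact le_iSup_of_le t (le_iSup_of_le htr le_rfl)
        _ = D := by rw [hD]
      exact le_add_self
  -- quasi-triangle inequality on the ball
  have htri := luxNormE_le_add_const Ψ volume measurableSet_ball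
    (fracMaximal n α f) (fracMaximal n α g) D hsplit
  set MB : ℝ≥0∞ := luxNormE Ψ volume (ball x r) (fracMaximal n α g) with hMB
  set LD : ℝ≥0∞ := luxNormE Ψ volume (ball x r) (fun _ => D) with hLD
  have h2r : (0:ℝ) < 2*r := by linarith
  set S₂ : ℝ≥0∞ := Φ.inv (ENNReal.ofReal (2*r) ^ (-lam₁)) with hS₂def
  set Sn : ℝ≥0∞ := Ψ.inv (ENNReal.ofReal (2*r) ^ (-(n:ℝ))) with hSndef
  have hS₂pf : 0 < S₂ ∧ S₂ ≠ ⊤ :=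
    hΦpos _ (hrpow_pos (2*r) lam₁ h2r) (hrpow_ne_top (2*r) lam₁ h2r)
  have hSnpf : 0 < Sn ∧ Sn ≠ ⊤ :=
    hΨpos _ (hrpow_pos (2*r) (n:ℝ) h2r) (hrpow_ne_top (2*r) (n:ℝ) h2r)
  -- Term 1: MB * S₂ ≤ A * N
  have hMBb : MB * S₂ ≤ ENNReal.ofReal A * N := by
    calc MB * S₂ ≤ luxNormE Ψ volume Set.univ (fracMaximal n α g) * S₂ :=
          mul_le_mul_left (luxNormE_mono_set Ψ volume (Set.subset_univ _) _) _
      _ ≤ (ENNReal.ofReal A * luxNorm Φ volume Set.univ g) * S₂ :=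
          mul_le_mul_left (hbdd g) _
      _ = ENNReal.ofReal A *
          (luxNormE Φ volume (ball x (2*r)) (fun z => (‖f z‖₊ : ℝ≥0∞)) * S₂) := by
          rw [hgdef, luxNorm_indicator Φ volume _ measurableSet_ball]; ring
      _ ≤ ENNReal.ofReal A * N := mul_le_mul_right (hball x (2*r) h2r) _
  -- the key comparison Rlam ≤ 2^n C S₂
  have hterm2r : Sn / S₂ ≤ E₁ := le_iSup_of_le (2*r) (le_iSup_of_le (by linarith) le_rfl)
  have hRnSn : Rn ≤ (2:ℝ≥0∞)^(n:ℕ) * Sn := by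
    have h2n0 : ((2:ℝ≥0∞)^(n:ℕ)) ≠ 0 := by positivity
    have h2nt : ((2:ℝ≥0∞)^(n:ℕ)) ≠ ⊤ := ENNReal.pow_ne_top (by norm_num)
    have h2n1 : (1:ℝ≥0∞) ≤ (2:ℝ≥0∞)^(n:ℕ) := one_le_pow_of_one_le' (by norm_num) n
    have h20 : (2:ℝ≥0∞) ≠ 0 := by norm_num
    have h2t : (2:ℝ≥0∞) ≠ ⊤ := by norm_num
    have harg : Rnarg = (2:ℝ≥0∞)^(n:ℕ) * (ENNReal.ofReal (2*r) ^ (-(n:ℝ))) := by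
      rw [ENNReal.ofReal_mul (by norm_num : (0:ℝ) ≤ 2),
        show ENNReal.ofReal 2 = (2:ℝ≥0∞) by norm_num,
        ENNReal.mul_rpow_of_ne_top h2t ENNReal.ofReal_ne_top,
        ← mul_assoc, ← ENNReal.rpow_natCast (2:ℝ≥0∞) n,
        ← ENNReal.rpow_add _ _ h20 h2t, add_neg_cancel,
        ENNReal.rpow_zero, one_mul, hRnarg]
    rw [hRn, harg]
    exact Ψ.inv_scale h2n1 h2nt _
  have hRL : Rlam ≤ (2:ℝ≥0∞)^(n:ℕ) * ENNReal.ofReal C * S₂ := by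
    have hcr : Sn / S₂ ≤ ENNReal.ofReal C * (Rn / Rlam) := hterm2r.trans hE₁le
    rw [ENNReal.div_le_iff hS₂pf.1.ne' hS₂pf.2] at hcr
    have hcross : Sn * Rlam ≤ ENNReal.ofReal C * Rn * S₂ := by
      calc Sn * Rlam ≤ (ENNReal.ofReal C * (Rn / Rlam) * S₂) * Rlam := mul_le_mul_left hcr _
        _ = ENNReal.ofReal C * Rn * S₂ * (Rlam⁻¹ * Rlam) := by rw [div_eq_mul_inv]; ring
        _ = ENNReal.ofReal C * Rn * S₂ := by
            rw [ENNReal.inv_mul_cancel hRlampf.1.ne' hRlampf.2, mul_one]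
    have hfinal : Sn * Rlam ≤ Sn * ((2:ℝ≥0∞)^(n:ℕ) * ENNReal.ofReal C * S₂) := by
      calc Sn * Rlam ≤ ENNReal.ofReal C * Rn * S₂ := hcross
        _ ≤ ENNReal.ofReal C * ((2:ℝ≥0∞)^(n:ℕ) * Sn) * S₂ := by gcongr
        _ = Sn * ((2:ℝ≥0∞)^(n:ℕ) * ENNReal.ofReal C * S₂) := by ring
    exact (ENNReal.mul_le_mul_iff_right hSnpf.1.ne' hSnpf.2).1 hfinal
  -- Term 2: Rlam * LD ≤ 4 c K₀ C K₁ N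
  set μB : ℝ≥0∞ := volume (ball x r) with hμB
  have hμB0 : μB ≠ 0 := (measure_ball_pos volume _ hr).ne'
  have hμBt : μB ≠ ⊤ := measure_ball_lt_top.ne
  have hτpf : 0 < Ψ.inv μB⁻¹ ∧ Ψ.inv μB⁻¹ ≠ ⊤ :=
    hΨpos _ (ENNReal.inv_pos.2 hμBt) (ENNReal.inv_ne_top.2 hμB0)
  set τ : ℝ≥0∞ := Ψ.inv μB⁻¹ with hτ
  have hconst : LD * τ ≤ D :=
    luxNormE_const_mul_le Ψ volume hμB0 hμBt hDt hτpf.1 hτpf.2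
  have hRnτ : Rn ≤ K₁ * τ := by
    have hargeq : Rnarg = μB⁻¹ * v := by
      rw [hμB, hballinv x r hr, mul_assoc, ENNReal.inv_mul_cancel hv0 hvt, mul_one, hRnarg]
    rw [hRn, hargeq]
    refine le_trans (Ψ.inv_mono ?_) (Ψ.inv_scale hK₁1 hK₁t _)
    rw [mul_comm]
    exact mul_le_mul_left (le_max_right _ _) _
  have hDRlam : D * Rlam ≤ 4 * ENNReal.ofReal c * K₀ * N * (ENNReal.ofReal C * Rn) := by
    calc D * Rlam = 4 * ENNReal.ofReal c * K₀ * N * (E₁ * Rlam) := by rw [hD]; ring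
      _ ≤ 4 * ENNReal.ofReal c * K₀ * N * ((ENNReal.ofReal C * (Rn / Rlam)) * Rlam) := by
          gcongr
      _ = 4 * ENNReal.ofReal c * K₀ * N * (ENNReal.ofReal C * Rn) * (Rlam⁻¹ * Rlam) := by
          rw [div_eq_mul_inv]; ring
      _ = 4 * ENNReal.ofReal c * K₀ * N * (ENNReal.ofReal C * Rn) := by
          rw [ENNReal.inv_mul_cancel hRlampf.1.ne' hRlampf.2, mul_one]
  have hbound2 : Rlam * LD ≤ 4 * ENNReal.ofReal c * K₀ * ENNReal.ofReal C * K₁ * N := by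
    refine (ENNReal.mul_le_mul_iff_left hτpf.1.ne' hτpf.2).1 ?_
    calc Rlam * LD * τ = (LD * τ) * Rlam := by ring
      _ ≤ D * Rlam := mul_le_mul_left hconst _
      _ ≤ 4 * ENNReal.ofReal c * K₀ * N * (ENNReal.ofReal C * Rn) := hDRlam
      _ ≤ 4 * ENNReal.ofReal c * K₀ * N * (ENNReal.ofReal C * (K₁ * τ)) := by gcongr
      _ = 4 * ENNReal.ofReal c * K₀ * ENNReal.ofReal C * K₁ * N * τ := by ring
  have hbound1 : Rlam * MB ≤ (2:ℝ≥0∞)^(n:ℕ) * ENNReal.ofReal C * ENNReal.ofReal A * N := by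
    refine (ENNReal.mul_le_mul_iff_left hS₂pf.1.ne' hS₂pf.2).1 ?_
    calc Rlam * MB * S₂ = Rlam * (MB * S₂) := by ring
      _ ≤ Rlam * (ENNReal.ofReal A * N) := mul_le_mul_right hMBb _
      _ ≤ ((2:ℝ≥0∞)^(n:ℕ) * ENNReal.ofReal C * S₂) * (ENNReal.ofReal A * N) :=
          mul_le_mul_left hRL _
      _ = (2:ℝ≥0∞)^(n:ℕ) * ENNReal.ofReal C * ENNReal.ofReal A * N * S₂ := by ring
  calc Rlam * luxNormE Ψ volume (ball x r) (fracMaximal n α f)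
      ≤ Rlam * (4 * MB + 4 * LD) := mul_le_mul_right htri _
    _ = 4 * (Rlam * MB) + 4 * (Rlam * LD) := by ring
    _ ≤ 4 * ((2:ℝ≥0∞)^(n:ℕ) * ENNReal.ofReal C * ENNReal.ofReal A * N)
        + 4 * (4 * ENNReal.ofReal c * K₀ * ENNReal.ofReal C * K₁ * N) := by
        gcongr
    _ = Γ * N := by rw [hΓ]; ring
end
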